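/- arXiv:0706.0323 — 3 statements merged into one kernel-verified Lean document; each statement's English description precedes it below -/
import Mathlib

section
/- Let ψ be a formal power series over ℂ with zero constant and linear coefficients and nonzero quadratic coefficient. Then there exist exactly two formal power series with zero constant term that solve ψ∘χ = X²: if χ is one solution, then the set of all solutions is {χ(X), χ(−X)}, and χ(X) ≠ χ(−X). (Proposition 2.3(1): ψ has exactly two compositional inverses as power series in √z, with coefficients related by β̃_k = (−1)^k β_k.) -/
open PowerSeries

/-- Formal composition `F ∘ G` of power series over `ℂ`, intended for the case where
`G` has zero constant term (so that only finitely many terms contribute to each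
coefficient). -/
noncomputable def comp (F G : PowerSeries ℂ) : PowerSeries ℂ :=
  PowerSeries.mk fun n =>
    PowerSeries.coeff n
      (∑ k ∈ Finset.range (n + 1), PowerSeries.C (PowerSeries.coeff k F) * G ^ k)


lemma coeff_comp (F G : PowerSeries ℂ) (n : ℕ) :
    coeff n (comp F G) = ∑ k ∈ Finset.range (n+1), coeff k F * coeff n (G ^ k) := by
  simp [comp, coeff_mk, map_sum, coeff_C_mul]

lemma coeff_pow_eq_zero {χ : PowerSeries ℂ} (hc : constantCoeff χ = 0)
    {j k : ℕ} (h : j < k) : coeff j (χ ^ k) = 0 := by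
  have h1 : (X : PowerSeries ℂ) ^ k ∣ χ ^ k := pow_dvd_pow_of_dvd (X_dvd_iff.mpr hc) k
  exact X_pow_dvd_iff.mp h1 j h

lemma coeff_pow_congr {χ χ' : PowerSeries ℂ} (hc : constantCoeff χ = 0)
    (hc' : constantCoeff χ' = 0) {n : ℕ}
    (hagree : ∀ j ≤ n, coeff j χ = coeff j χ') :
    ∀ k, ∀ m ≤ n + k, coeff m (χ ^ (k+1)) = coeff m (χ' ^ (k+1)) := by
  intro k
  induction k with
  | zero => intro m hm; simpa using hagree m (by simpa using hm)
  | succ k ih =>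
      intro m hm
      rw [pow_succ' χ (k+1), pow_succ' χ' (k+1), coeff_mul, coeff_mul]
      apply Finset.sum_congr rfl
      intro p hp
      rw [Finset.HasAntidiagonal.mem_antidiagonal] at hp
      rcases Nat.eq_zero_or_pos p.1 with h0 | h0
      · rw [h0]
        simp [coeff_zero_eq_constantCoeff, hc, hc']
      · rcases lt_or_ge p.2 (k+1) with hlt | hge
        · rw [coeff_pow_eq_zero hc hlt, coeff_pow_eq_zero hc' hlt, mul_zero, mul_zero]
        · rw [hagree p.1 (by omega), ih p.2 (by omega)]

lemma coeff_comp_congr {ψ χ χ' : PowerSeries ℂ} (h1 : coeff 1 ψ = 0)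
    (hc : constantCoeff χ = 0) (hc' : constantCoeff χ' = 0) {n : ℕ}
    (hagree : ∀ j ≤ n, coeff j χ = coeff j χ') :
    ∀ m ≤ n + 1, coeff m (comp ψ χ) = coeff m (comp ψ χ') := by
  intro m hm
  rw [coeff_comp, coeff_comp]
  apply Finset.sum_congr rfl
  intro k hk
  match k with
  | 0 => simp
  | 1 =>
      rcases Nat.lt_or_ge m (n+1) with h | h
      · rw [pow_one, pow_one, hagree m (by omega)]
      · rw [h1, zero_mul, zero_mul]
  | (k+2) =>
      rw [coeff_pow_congr hc hc' hagree (k+1) m (by omega)]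

lemma coeff_comp_key {ψ χ χ' : PowerSeries ℂ}
    (h1 : coeff 1 ψ = 0)
    (hc : constantCoeff χ = 0) (hc' : constantCoeff χ' = 0) {n : ℕ} (hn : 1 ≤ n)
    (hagree : ∀ j ≤ n, coeff j χ = coeff j χ') :
    coeff (n+2) (comp ψ χ) =
      coeff (n+2) (comp ψ χ') +
        2 * coeff 2 ψ * coeff 1 χ * (coeff (n+1) χ - coeff (n+1) χ') := by
  have hsq : coeff (n+2) (χ^2) =
      coeff (n+2) (χ'^2) + 2 * coeff 1 χ * (coeff (n+1) χ - coeff (n+1) χ') := by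
    have hfac : (χ - χ') * (χ + χ') = χ^2 - χ'^2 := by ring
    have hco : coeff (n+2) ((χ - χ') * (χ + χ'))
        = coeff (n+2) (χ^2) - coeff (n+2) (χ'^2) := by rw [hfac, map_sub]
    have hmem : ((n+1 : ℕ), (1 : ℕ)) ∈ Finset.HasAntidiagonal.antidiagonal (n+2) := by
      simp [Finset.HasAntidiagonal.mem_antidiagonal]
    have hsum : coeff (n+2) ((χ - χ') * (χ + χ'))
        = coeff (n+1) (χ - χ') * coeff 1 (χ + χ') := by
      rw [coeff_mul]
      apply Finset.sum_eq_single_of_mem _ hmem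
      intro p hp hne
      rw [Finset.HasAntidiagonal.mem_antidiagonal] at hp
      rcases le_or_gt p.1 n with hle | hgt
      · rw [map_sub, hagree p.1 hle, sub_self, zero_mul]
      · have : p.1 = n + 2 := by
          rcases Nat.lt_or_ge p.1 (n+2) with h' | h'
          · exfalso
            apply hne
            have : p.1 = n+1 := by omega
            have h2 : p.2 = 1 := by omega
            exact Prod.ext this h2
          · omega
        have hp2 : p.2 = 0 := by omega
        rw [hp2]
        simp [coeff_zero_eq_constantCoeff, hc, hc']
    have h1' : coeff 1 χ' = coeff 1 χ := (hagree 1 hn).symm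
    have := hco.symm.trans hsum
    rw [map_sub, map_add, h1'] at this
    linear_combination this
  rw [coeff_comp, coeff_comp]
  have h2m : 2 ∈ Finset.range (n+3) := by simp
  rw [← Finset.add_sum_erase _ _ h2m, ← Finset.add_sum_erase _ _ h2m]
  have hrest : ∑ k ∈ (Finset.range (n+3)).erase 2, coeff k ψ * coeff (n+2) (χ^k)
      = ∑ k ∈ (Finset.range (n+3)).erase 2, coeff k ψ * coeff (n+2) (χ'^k) := by
    apply Finset.sum_congr rfl
    intro k hk
    have hk2 : k ≠ 2 := (Finset.mem_erase.mp hk).1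
    match k with
    | 0 => simp
    | 1 => rw [h1, zero_mul, zero_mul]
    | (k+2) =>
        have hk1 : k ≥ 1 := by omega
        have : (k+2) = (k+1)+1 := rfl
        rw [this, coeff_pow_congr hc hc' hagree (k+1) (n+2) (by omega)]
  rw [hrest, hsq]
  ring

lemma comp_rescale (F G : PowerSeries ℂ) (c : ℂ) :
    comp F (rescale c G) = rescale c (comp F G) := by
  ext n
  rw [coeff_rescale, coeff_comp, coeff_comp, Finset.mul_sum]
  apply Finset.sum_congr rfl
  intro k _
  rw [← map_pow, coeff_rescale]
  ring

lemma constCoeff_rescale (c : ℂ) (χ : PowerSeries ℂ) :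
    constantCoeff (rescale c χ) = constantCoeff χ := by
  rw [← coeff_zero_eq_constantCoeff_apply, ← coeff_zero_eq_constantCoeff_apply, coeff_rescale]
  simp

lemma flip_sol {ψ χ : PowerSeries ℂ} (hs : comp ψ χ = X^2) :
    comp ψ (rescale (-1:ℂ) χ) = X^2 := by
  rw [comp_rescale, hs, map_pow, rescale_neg_one_X]
  ring

lemma coeff_two_comp {ψ χ : PowerSeries ℂ} (h0 : coeff 0 ψ = 0) (h1 : coeff 1 ψ = 0)
    (hc : constantCoeff χ = 0) :
    coeff 2 (comp ψ χ) = coeff 2 ψ * (coeff 1 χ)^2 := by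
  rw [coeff_comp, Finset.sum_range_succ, Finset.sum_range_succ, Finset.sum_range_one,
    h0, h1]
  have : coeff 2 (χ^2) = (coeff 1 χ)^2 := by
    rw [sq, coeff_mul, Finset.Nat.sum_antidiagonal_eq_sum_range_succ_mk,
      Finset.sum_range_succ, Finset.sum_range_succ, Finset.sum_range_one]
    simp [coeff_zero_eq_constantCoeff, hc]
    ring
  rw [this]
  ring

noncomputable def tseq (ψ : PowerSeries ℂ) (s : ℂ) : ℕ → PowerSeries ℂ
  | 0 => C s * X
  | (n+1) => tseq ψ s n +
      C (-(coeff (n+3) (comp ψ (tseq ψ s n))) / (2 * coeff 2 ψ * s)) * X ^ (n+2)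

lemma tseq_const (ψ : PowerSeries ℂ) (s : ℂ) (n : ℕ) :
    constantCoeff (tseq ψ s n) = 0 := by
  induction n with
  | zero => simp [tseq]
  | succ n ih =>
      rw [tseq, map_add, ih]
      simp [← coeff_zero_eq_constantCoeff_apply, coeff_C_mul, coeff_X_pow]

lemma tseq_high (ψ : PowerSeries ℂ) (s : ℂ) (n : ℕ) :
    ∀ j, n + 2 ≤ j → coeff j (tseq ψ s n) = 0 := by
  induction n with
  | zero =>
      intro j hj
      rw [tseq, coeff_C_mul, coeff_X]
      rw [if_neg (by omega)]
      ring
  | succ n ih =>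
      intro j hj
      rw [tseq, map_add, ih j (by omega), coeff_C_mul, coeff_X_pow,
        if_neg (by omega)]
      ring

lemma tseq_agree (ψ : PowerSeries ℂ) (s : ℂ) (n : ℕ) :
    ∀ j ≤ n + 1, coeff j (tseq ψ s (n+1)) = coeff j (tseq ψ s n) := by
  intro j hj
  rw [tseq, map_add, coeff_C_mul, coeff_X_pow, if_neg (by omega)]
  ring

lemma tseq_agree' (ψ : PowerSeries ℂ) (s : ℂ) {n m : ℕ} (hnm : n ≤ m) :
    ∀ j ≤ n + 1, coeff j (tseq ψ s m) = coeff j (tseq ψ s n) := by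
  induction m with
  | zero =>
      intro j hj
      have : n = 0 := by omega
      subst this; rfl
  | succ m ih =>
      intro j hj
      rcases Nat.lt_or_ge n (m+1) with h | h
      · rw [tseq_agree ψ s m j (by omega)]
        exact ih (by omega) j hj
      · have : n = m + 1 := by omega
        subst this; rfl

lemma tseq_one (ψ : PowerSeries ℂ) (s : ℂ) (n : ℕ) :
    coeff 1 (tseq ψ s n) = s := by
  have := tseq_agree' ψ s (Nat.zero_le n) 1 (by omega)
  rw [this, tseq, coeff_C_mul, coeff_X, if_pos rfl, mul_one]

lemma tseq_sol (ψ : PowerSeries ℂ) (s : ℂ)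
    (h0 : coeff 0 ψ = 0) (h1 : coeff 1 ψ = 0) (h2 : coeff 2 ψ ≠ 0)
    (hs2 : s ^ 2 = (coeff 2 ψ)⁻¹) :
    ∀ n, ∀ m ≤ n + 2, coeff m (comp ψ (tseq ψ s n)) = coeff m ((X : PowerSeries ℂ)^2) := by
  have hsne : s ≠ 0 := by
    intro h
    rw [h] at hs2
    exact inv_ne_zero h2 (by simpa using hs2.symm)
  intro n
  induction n with
  | zero =>
      intro m hm
      have hpow : ∀ k, (C s * X)^k = C (s^k) * X^k := by
        intro k; rw [mul_pow, ← map_pow]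
      have hco : ∀ k, coeff m ((C s * X)^k) = if m = k then s^k else 0 := by
        intro k
        rw [hpow, coeff_C_mul, coeff_X_pow]
        split <;> ring
      interval_cases m
      · rw [coeff_comp]
        simp [tseq, hco, h0, coeff_X_pow]
      · rw [coeff_comp]
        rw [Finset.sum_range_succ, Finset.sum_range_one]
        simp [tseq, hco, h0, h1, coeff_X_pow]
      · rw [coeff_comp]
        rw [Finset.sum_range_succ, Finset.sum_range_succ, Finset.sum_range_one]
        simp only [tseq, hco, h0, h1, coeff_X_pow]
        rw [if_true, if_true, hs2]
        field_simp
        simp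
  | succ n ih =>
      intro m hm
      rcases Nat.lt_or_ge m (n+3) with h | h
      · have := coeff_comp_congr h1 (tseq_const ψ s (n+1)) (tseq_const ψ s n)
          (tseq_agree ψ s n) m (by omega)
        rw [this]
        exact ih m (by omega)
      · have hm3 : m = n + 3 := by omega
        subst hm3
        have key := coeff_comp_key h1 (tseq_const ψ s (n+1)) (tseq_const ψ s n)
          (by omega : 1 ≤ n + 1) (tseq_agree ψ s n)
        have hhigh : coeff (n+2) (tseq ψ s n) = 0 := tseq_high ψ s n (n+2) le_rfl
        have hnew : coeff (n+2) (tseq ψ s (n+1))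
            = -(coeff (n+3) (comp ψ (tseq ψ s n))) / (2 * coeff 2 ψ * s) := by
          rw [tseq, map_add, hhigh, coeff_C_mul, coeff_X_pow, if_pos rfl]
          ring
        have hone : coeff 1 (tseq ψ s (n+1)) = s := tseq_one ψ s (n+1)
        have : (n+1) + 2 = n + 3 := by omega
        rw [this] at key
        rw [key, hnew, hhigh, hone]
        have hX : coeff (n+3) ((X : PowerSeries ℂ)^2) = 0 := by
          rw [coeff_X_pow, if_neg (by omega)]
        rw [hX]
        field_simp
        ring

lemma sol_unique {ψ χ χ' : PowerSeries ℂ} (h1 : coeff 1 ψ = 0) (h2 : coeff 2 ψ ≠ 0)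
    (hc : constantCoeff χ = 0) (hc' : constantCoeff χ' = 0)
    (hs : comp ψ χ = X ^ 2) (hs' : comp ψ χ' = X ^ 2)
    (hb1 : coeff 1 χ ≠ 0)
    (he1 : coeff 1 χ = coeff 1 χ') : χ = χ' := by
  have key : ∀ n, ∀ j ≤ n, coeff j χ = coeff j χ' := by
    intro n
    induction n with
    | zero =>
        intro j hj
        have : j = 0 := by omega
        subst this
        rw [coeff_zero_eq_constantCoeff_apply, coeff_zero_eq_constantCoeff_apply, hc, hc']
    | succ n ih =>
        intro j hj
        rcases Nat.lt_or_ge j (n+1) with h | h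
        · exact ih j (by omega)
        · have hj' : j = n+1 := by omega
          subst hj'
          rcases Nat.eq_zero_or_pos n with hz | hpos
          · subst hz; exact he1
          · have hk := coeff_comp_key h1 hc hc' hpos ih
            rw [hs, hs'] at hk
            have ht : 2 * coeff 2 ψ * coeff 1 χ *
                (coeff (n+1) χ - coeff (n+1) χ') = 0 := by linear_combination -hk
            have hne : 2 * coeff 2 ψ * coeff 1 χ ≠ 0 :=
              mul_ne_zero (mul_ne_zero two_ne_zero h2) hb1
            have := (mul_eq_zero.mp ht).resolve_left hne
            linear_combination this
  ext j
  exact key j j le_rfl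

lemma sol_coeff_one_sq {ψ χ : PowerSeries ℂ}
    (h0 : coeff 0 ψ = 0) (h1 : coeff 1 ψ = 0)
    (hc : constantCoeff χ = 0) (hs : comp ψ χ = X ^ 2) :
    coeff 2 ψ * (coeff 1 χ)^2 = 1 := by
  have := coeff_two_comp h0 h1 hc
  rw [hs, coeff_X_pow, if_pos rfl] at this
  exact this.symm

theorem stmt_4' (ψ : PowerSeries ℂ)
    (h0 : PowerSeries.coeff 0 ψ = 0)
    (h1 : PowerSeries.coeff 1 ψ = 0)
    (h2 : PowerSeries.coeff 2 ψ ≠ 0) :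
    (∃ χ : PowerSeries ℂ, PowerSeries.constantCoeff χ = 0 ∧
        comp ψ χ = PowerSeries.X ^ 2) ∧
      ∀ χ : PowerSeries ℂ, PowerSeries.constantCoeff χ = 0 →
        comp ψ χ = PowerSeries.X ^ 2 →
        ({χ' : PowerSeries ℂ | PowerSeries.constantCoeff χ' = 0 ∧
            comp ψ χ' = PowerSeries.X ^ 2}
          = {χ, PowerSeries.rescale (-1 : ℂ) χ} ∧
          χ ≠ PowerSeries.rescale (-1 : ℂ) χ) := by
  constructor
  · -- existence
    obtain ⟨s, hs2⟩ := IsAlgClosed.exists_pow_nat_eq ((coeff 2 ψ)⁻¹ : ℂ) (n := 2) (by omega)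
    set χ : PowerSeries ℂ := PowerSeries.mk (fun k => coeff k (tseq ψ s k)) with hχ
    have hagree : ∀ n, ∀ j ≤ n + 1, coeff j χ = coeff j (tseq ψ s n) := by
      intro n j hj
      rw [hχ, coeff_mk]
      rcases Nat.lt_or_ge j (n+1) with h | h
      · exact (tseq_agree' ψ s (by omega : j ≤ n) j (by omega)).symm
      · have : j = n + 1 := by omega
        subst this
        exact tseq_agree' ψ s (by omega : n ≤ n + 1) (n+1) (by omega)
    have hcχ : constantCoeff χ = 0 := by
      rw [← coeff_zero_eq_constantCoeff_apply, hχ, coeff_mk,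
        coeff_zero_eq_constantCoeff_apply]
      exact tseq_const ψ s 0
    refine ⟨χ, hcχ, ?_⟩
    ext m
    have := coeff_comp_congr h1 hcχ (tseq_const ψ s (m+1)) (hagree (m+1)) m (by omega)
    rw [this]
    exact tseq_sol ψ s h0 h1 h2 hs2 (m+1) m (by omega)
  · -- uniqueness
    intro χ hc hs
    have hb1 : coeff 1 χ ≠ 0 := by
      intro h
      have := sol_coeff_one_sq h0 h1 hc hs
      rw [h] at this
      simp at this
    have hcflip : constantCoeff (rescale (-1:ℂ) χ) = 0 := by
      rw [constCoeff_rescale]; exact hc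
    have hsflip : comp ψ (rescale (-1:ℂ) χ) = X ^ 2 := flip_sol hs
    have hflip1 : coeff 1 (rescale (-1:ℂ) χ) = -(coeff 1 χ) := by
      rw [coeff_rescale]; ring
    constructor
    · ext χ'
      simp only [Set.mem_setOf_eq, Set.mem_insert_iff, Set.mem_singleton_iff]
      constructor
      · rintro ⟨hc', hs'⟩
        have hsq := sol_coeff_one_sq h0 h1 hc hs
        have hsq' := sol_coeff_one_sq h0 h1 hc' hs'
        have hdiff : (coeff 1 χ - coeff 1 χ') * (coeff 1 χ + coeff 1 χ') = 0 := by
          have ha : (coeff 1 χ)^2 = (coeff 1 χ')^2 :=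
            mul_left_cancel₀ h2 (hsq.trans hsq'.symm)
          linear_combination ha
        rcases mul_eq_zero.mp hdiff with h | h
        · left
          exact (sol_unique h1 h2 hc hc' hs hs' hb1 (by linear_combination h)).symm
        · right
          have : coeff 1 (rescale (-1:ℂ) χ) = coeff 1 χ' := by
            rw [hflip1]; linear_combination -h
          exact (sol_unique h1 h2 hcflip hc' hsflip hs' (by rw [hflip1]; exact neg_ne_zero.mpr hb1) this).symm
      · rintro (rfl | rfl)
        · exact ⟨hc, hs⟩
        · exact ⟨hcflip, hsflip⟩
    · intro h
      have := congrArg (coeff 1) h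
      rw [hflip1] at this
      apply hb1
      linear_combination this / 2

/-- Proposition 2.3(1): `ψ` has exactly two compositional inverses as power series in
`√z`: a solution `χ` of `ψ ∘ χ = X²` with zero constant term exists, and for any such
solution `χ`, the set of all solutions is `{χ(X), χ(−X)}` (the second series having
coefficients `β̃ₖ = (−1)ᵏ βₖ`), these two being distinct. -/
theorem stmt_4 (ψ : PowerSeries ℂ)
    (h0 : PowerSeries.coeff 0 ψ = 0)
    (h1 : PowerSeries.coeff 1 ψ = 0)
    (h2 : PowerSeries.coeff 2 ψ ≠ 0) :
    (∃ χ : PowerSeries ℂ, PowerSeries.constantCoeff χ = 0 ∧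
        comp ψ χ = PowerSeries.X ^ 2) ∧
      ∀ χ : PowerSeries ℂ, PowerSeries.constantCoeff χ = 0 →
        comp ψ χ = PowerSeries.X ^ 2 →
        ({χ' : PowerSeries ℂ | PowerSeries.constantCoeff χ' = 0 ∧
            comp ψ χ' = PowerSeries.X ^ 2}
          = {χ, PowerSeries.rescale (-1 : ℂ) χ} ∧
          χ ≠ PowerSeries.rescale (-1 : ℂ) χ) := by
  exact stmt_4' ψ h0 h1 h2
end

section
/- Let C and ψ be formal power series over ℂ with zero constant term such that ψ = C∘(X·(1+ψ)) (the moment–cumulant relation). Assume the linear coefficient of ψ vanishes and its quadratic coefficient is nonzero (the mean-zero case), and let χ be a formal power series with zero constant term satisfying ψ∘χ = X² (one of the two √z-inverses of ψ). Then C∘((1+X²)·χ) = X². (The relation C[zS(z)] = z read as formal power series in √z, for the case φ(x) = 0, φ(x²) ≠ 0.) -/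
open PowerSeries

namespace CompAux

open Finset

variable {G : PowerSeries ℂ}

lemma coeff_pow_eq_zero (hG : constantCoeff G = 0) {n k : ℕ} (h : n < k) :
    coeff n (G ^ k) = 0 := by
  have hdvd : (X : PowerSeries ℂ) ^ k ∣ G ^ k :=
    pow_dvd_pow_of_dvd (X_dvd_iff.mpr hG) k
  exact (X_pow_dvd_iff.mp hdvd) n h

lemma coeff_comp (F G : PowerSeries ℂ) (n : ℕ) :
    coeff n (comp F G) = ∑ k ∈ range (n + 1), coeff k F * coeff n (G ^ k) := by
  simp [comp, coeff_mk, map_sum, coeff_C_mul]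

lemma coeff_comp' (hG : constantCoeff G = 0) (F : PowerSeries ℂ) {n m : ℕ} (h : n < m) :
    coeff n (comp F G) = ∑ k ∈ range m, coeff k F * coeff n (G ^ k) := by
  rw [coeff_comp]
  refine Finset.sum_subset (Finset.range_subset_range.mpr h) (fun k _ hk => ?_)
  have hnk : n < k := by simp only [Finset.mem_range] at hk; omega
  rw [coeff_pow_eq_zero hG hnk, mul_zero]

lemma coeff_aeval (p : Polynomial ℂ) (G : PowerSeries ℂ) (n : ℕ) :
    coeff n (Polynomial.aeval G p)
      = ∑ k ∈ range (p.natDegree + 1), p.coeff k * coeff n (G ^ k) := by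
  rw [Polynomial.aeval_eq_sum_range, map_sum]
  refine Finset.sum_congr rfl fun k _ => ?_
  rw [map_smul, smul_eq_mul]

lemma coeff_aeval_eq_zero (hG : constantCoeff G = 0) {p : Polynomial ℂ} {n : ℕ}
    (hp : ∀ k ≤ n, p.coeff k = 0) :
    coeff n (Polynomial.aeval G p) = 0 := by
  rw [coeff_aeval]
  refine Finset.sum_eq_zero fun k _ => ?_
  rcases le_or_gt k n with h | h
  · rw [hp k h, zero_mul]
  · rw [coeff_pow_eq_zero hG h, mul_zero]

lemma coeff_aeval_congr (hG : constantCoeff G = 0) {p q : Polynomial ℂ} {n : ℕ}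
    (hpq : ∀ k ≤ n, p.coeff k = q.coeff k) :
    coeff n (Polynomial.aeval G p) = coeff n (Polynomial.aeval G q) := by
  have h0 : coeff n (Polynomial.aeval G (p - q)) = 0 :=
    coeff_aeval_eq_zero hG (fun k hk => by
      rw [Polynomial.coeff_sub, hpq k hk, sub_self])
  rw [map_sub, map_sub] at h0
  exact sub_eq_zero.mp h0

lemma coeff_comp_trunc (hG : constantCoeff G = 0) (F : PowerSeries ℂ) {n m : ℕ} (h : n < m) :
    coeff n (comp F G) = coeff n (Polynomial.aeval G (trunc m F)) := by
  set p := trunc m F with hp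
  set M := max (n + 1) (p.natDegree + 1) with hM
  rw [coeff_comp, coeff_aeval]
  have h1 : ∑ k ∈ range (n + 1), coeff k F * coeff n (G ^ k)
      = ∑ k ∈ range M, coeff k F * coeff n (G ^ k) :=
    Finset.sum_subset (Finset.range_subset_range.mpr (le_max_left _ _)) (fun k _ hk => by
      have hnk : n < k := by simp only [Finset.mem_range] at hk; omega
      rw [coeff_pow_eq_zero hG hnk, mul_zero])
  have h2 : ∑ k ∈ range (p.natDegree + 1), p.coeff k * coeff n (G ^ k)
      = ∑ k ∈ range M, p.coeff k * coeff n (G ^ k) :=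
    Finset.sum_subset (Finset.range_subset_range.mpr (le_max_right _ _)) (fun k _ hk => by
      have hdk : p.natDegree < k := by simp only [Finset.mem_range] at hk; omega
      rw [Polynomial.coeff_eq_zero_of_natDegree_lt hdk, zero_mul])
  rw [h1, h2]
  refine Finset.sum_congr rfl fun k _ => ?_
  rcases le_or_gt k n with hk | hk
  · rw [hp, PowerSeries.coeff_trunc, if_pos (by omega)]
  · rw [coeff_pow_eq_zero hG hk, mul_zero, mul_zero]

lemma comp_mul (hG : constantCoeff G = 0) (F F' : PowerSeries ℂ) :
    comp (F * F') G = comp F G * comp F' G := by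
  ext n
  rw [coeff_comp_trunc hG (F * F') (Nat.lt_succ_self n)]
  have key : coeff n (Polynomial.aeval G (trunc (n + 1) (F * F')))
      = coeff n (Polynomial.aeval G (trunc (n + 1) F * trunc (n + 1) F')) := by
    refine coeff_aeval_congr hG fun k hk => ?_
    rw [PowerSeries.coeff_trunc, if_pos (by omega), Polynomial.coeff_mul,
      PowerSeries.coeff_mul]
    refine Finset.sum_congr rfl fun ij hij => ?_
    rw [Finset.HasAntidiagonal.mem_antidiagonal] at hij
    rw [PowerSeries.coeff_trunc, if_pos (by omega), PowerSeries.coeff_trunc,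
      if_pos (by omega)]
  rw [key, map_mul, PowerSeries.coeff_mul, PowerSeries.coeff_mul]
  refine Finset.sum_congr rfl fun ij hij => ?_
  rw [Finset.HasAntidiagonal.mem_antidiagonal] at hij
  rw [← coeff_comp_trunc hG F (by omega), ← coeff_comp_trunc hG F' (by omega)]

lemma comp_one (G : PowerSeries ℂ) : comp 1 G = 1 := by
  ext n
  rw [coeff_comp]
  rw [Finset.sum_eq_single 0]
  · simp
  · intro k _ hk0
    simp [PowerSeries.coeff_one, hk0]
  · intro h; simp at h

lemma comp_pow (hG : constantCoeff G = 0) (F : PowerSeries ℂ) (k : ℕ) :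
    comp (F ^ k) G = comp F G ^ k := by
  induction k with
  | zero => simpa using comp_one G
  | succ k ih => rw [pow_succ, comp_mul hG, ih, pow_succ]

lemma comp_add (F F' G : PowerSeries ℂ) : comp (F + F') G = comp F G + comp F' G := by
  ext n
  simp only [coeff_comp, map_add, add_mul, Finset.sum_add_distrib]

lemma comp_X (hG : constantCoeff G = 0) : comp X G = G := by
  ext n
  rw [coeff_comp, Finset.sum_eq_single 1]
  · simp
  · intro k _ hk1
    simp [PowerSeries.coeff_X, hk1]
  · intro h1
    have hn : n = 0 := by simp only [Finset.mem_range] at h1; omega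
    subst hn
    simpa [PowerSeries.coeff_X] using hG

lemma comp_assoc (F G H : PowerSeries ℂ) (hG : constantCoeff G = 0)
    (hH : constantCoeff H = 0) :
    comp (comp F G) H = comp F (comp G H) := by
  ext n
  rw [coeff_comp, coeff_comp]
  calc ∑ j ∈ range (n + 1), coeff j (comp F G) * coeff n (H ^ j)
      = ∑ j ∈ range (n + 1),
          (∑ k ∈ range (n + 1), coeff k F * coeff j (G ^ k)) * coeff n (H ^ j) := by
        refine Finset.sum_congr rfl fun j hj => ?_
        rw [Finset.mem_range] at hj
        rw [coeff_comp' hG F hj]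
    _ = ∑ k ∈ range (n + 1),
          coeff k F * ∑ j ∈ range (n + 1), coeff j (G ^ k) * coeff n (H ^ j) := by
        simp_rw [Finset.sum_mul, Finset.mul_sum]
        rw [Finset.sum_comm]
        exact Finset.sum_congr rfl fun k _ => Finset.sum_congr rfl fun j _ => by ring
    _ = ∑ k ∈ range (n + 1), coeff k F * coeff n (comp (G ^ k) H) := by
        refine Finset.sum_congr rfl fun k _ => ?_
        rw [coeff_comp]
    _ = ∑ k ∈ range (n + 1), coeff k F * coeff n ((comp G H) ^ k) := by
        refine Finset.sum_congr rfl fun k _ => ?_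
        rw [comp_pow hH]

end CompAux

/-- The relation `C[zS(z)] = z` read as formal power series in `√z` (encoded via
`z = X²`), for the mean-zero case `φ(x) = 0`, `φ(x²) ≠ 0`: if `ψ = C[z·M(z)]` with
`M = 1 + ψ`, the linear coefficient of `ψ` vanishes, its quadratic coefficient is
nonzero, and `χ` is one of the two `√z`-inverses of `ψ` (`ψ ∘ χ = X²`), then
`C ∘ ((1+X²)·χ) = X²`. -/
theorem stmt_10 (C ψ χ : PowerSeries ℂ)
    (hC0 : PowerSeries.constantCoeff C = 0)
    (hψ0 : PowerSeries.constantCoeff ψ = 0)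
    (hmc : ψ = comp C (PowerSeries.X * (1 + ψ)))
    (hψ1 : PowerSeries.coeff 1 ψ = 0)
    (hψ2 : PowerSeries.coeff 2 ψ ≠ 0)
    (hχ0 : PowerSeries.constantCoeff χ = 0)
    (hχ : comp ψ χ = PowerSeries.X ^ 2) :
    comp C ((1 + PowerSeries.X ^ 2) * χ) = PowerSeries.X ^ 2 := by
  have hA0 : PowerSeries.constantCoeff (PowerSeries.X * (1 + ψ)) = 0 := by simp
  have h1 : comp (PowerSeries.X * (1 + ψ)) χ = (1 + PowerSeries.X ^ 2) * χ := by
    rw [CompAux.comp_mul hχ0, CompAux.comp_X hχ0, CompAux.comp_add, CompAux.comp_one, hχ,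
      mul_comm]
  rw [← h1, ← CompAux.comp_assoc C _ χ hA0 hχ0, ← hmc, hχ]
end

section
/- Let σ be the unique formal power series over ℂ with constant term 2 satisfying σ² = 4 + X², and define χ = X·(σ − X)·(2·(1+X²)²)⁻¹ (the χ-series, in the variable w = √z, of the free multiplicative convolution of the free Poisson distribution with the free Poisson distribution shifted by −1, whose S-transform is (−z+√(z²+4z))/(2z(1+z))). If ψ is a formal power series over ℂ with zero constant term satisfying ψ∘χ = X², then M = 1 + ψ satisfies the algebraic equation X²·M⁴ + X·M³ − X·M² − M + 1 = 0. (This is the formal power series form of the equation g⁴z² + z²g³ − zg² − gz + 1 = 0 for the Cauchy transform of μ ⊠ γ.) -/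
open PowerSeries Finset

section Aux

variable {G : PowerSeries ℂ}

lemma coeff_eval₂_eq_zero (hG : PowerSeries.constantCoeff G = 0) {p : Polynomial ℂ} {n : ℕ}
    (hp : ∀ k ≤ n, p.coeff k = 0) :
    PowerSeries.coeff n (Polynomial.eval₂ (PowerSeries.C) G p) = 0 := by
  rw [Polynomial.eval₂_eq_sum, Polynomial.sum, map_sum]
  apply Finset.sum_eq_zero
  intro k _
  rcases le_or_gt k n with h | h
  · rw [hp k h]; simp
  · have hXG : (PowerSeries.X : PowerSeries ℂ) ∣ G := PowerSeries.X_dvd_iff.mpr hG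
    have hdvd : (PowerSeries.X : PowerSeries ℂ) ^ (n + 1) ∣
        PowerSeries.C (p.coeff k) * G ^ k :=
      Dvd.dvd.mul_left ((pow_dvd_pow _ h).trans (pow_dvd_pow_of_dvd hXG k)) _
    exact (PowerSeries.X_pow_dvd_iff.mp hdvd) n (by omega)

lemma coeff_eval₂_congr (hG : PowerSeries.constantCoeff G = 0) {p q : Polynomial ℂ} {n : ℕ}
    (hpq : ∀ k ≤ n, p.coeff k = q.coeff k) :
    PowerSeries.coeff n (Polynomial.eval₂ (PowerSeries.C) G p) =
      PowerSeries.coeff n (Polynomial.eval₂ (PowerSeries.C) G q) := by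
  have := coeff_eval₂_eq_zero hG (p := p - q) (n := n) (fun k hk => by
    simp [Polynomial.coeff_sub, hpq k hk])
  rw [Polynomial.eval₂_sub, map_sub, sub_eq_zero] at this
  exact this

lemma coeff_comp_eval (hG : PowerSeries.constantCoeff G = 0) (F : PowerSeries ℂ) {n N : ℕ} (hN : n < N) :
    PowerSeries.coeff n (comp F G) =
      PowerSeries.coeff n (Polynomial.eval₂ (PowerSeries.C) G (trunc N F)) := by
  have h1 : PowerSeries.coeff n (comp F G) =
      PowerSeries.coeff n (Polynomial.eval₂ (PowerSeries.C) G (trunc (n + 1) F)) := by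
    rw [comp, coeff_mk, eval₂_trunc_eq_sum_range]
  rw [h1]
  apply coeff_eval₂_congr hG
  intro k hk
  rw [coeff_trunc, coeff_trunc, if_pos (by omega), if_pos (by omega)]

lemma comp_add (F F' : PowerSeries ℂ) : comp (F + F') G = comp F G + comp F' G := by
  ext n
  simp only [comp, coeff_mk, map_add]
  rw [← map_add, ← Finset.sum_add_distrib]
  congr 1
  apply Finset.sum_congr rfl
  intro k _
  rw [← add_mul, ← map_add, map_add]

lemma comp_mul (hG : PowerSeries.constantCoeff G = 0) (F F' : PowerSeries ℂ) : comp (F * F') G = comp F G * comp F' G := by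
  ext n
  rw [coeff_comp_eval hG (F * F') (Nat.lt_succ_self n)]
  have key : ∀ k ≤ n, (trunc (n + 1) (F * F')).coeff k =
      (trunc (n + 1) F * trunc (n + 1) F').coeff k := by
    intro k hk
    rw [coeff_trunc, if_pos (by omega), PowerSeries.coeff_mul, Polynomial.coeff_mul]
    apply Finset.sum_congr rfl
    intro p hp
    rw [Finset.HasAntidiagonal.mem_antidiagonal] at hp
    rw [coeff_trunc, coeff_trunc, if_pos (by omega), if_pos (by omega)]
  rw [coeff_eval₂_congr hG key, Polynomial.eval₂_mul, PowerSeries.coeff_mul,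
    PowerSeries.coeff_mul]
  apply Finset.sum_congr rfl
  intro p hp
  rw [Finset.HasAntidiagonal.mem_antidiagonal] at hp
  rw [coeff_comp_eval hG F (show p.1 < n + 1 by omega),
    coeff_comp_eval hG F' (show p.2 < n + 1 by omega)]

lemma comp_one (hG : PowerSeries.constantCoeff G = 0) : comp 1 G = 1 := by
  ext n
  rw [comp, coeff_mk]
  rw [Finset.sum_eq_single 0]
  · simp
  · intro k _ hk
    rw [PowerSeries.coeff_one, if_neg hk]
    simp
  · simp

lemma comp_X (hG : PowerSeries.constantCoeff G = 0) : comp PowerSeries.X G = G := by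
  ext n
  rw [comp, coeff_mk]
  rcases Nat.eq_zero_or_pos n with h | h
  · subst h
    simp [PowerSeries.coeff_zero_eq_constantCoeff, hG]
  · rw [Finset.sum_eq_single 1]
    · simp
    · intro k _ hk
      rw [PowerSeries.coeff_X, if_neg hk]
      simp
    · intro h1
      rw [Finset.mem_range] at h1
      omega

lemma comp_neg (F : PowerSeries ℂ) : comp (-F) G = -comp F G := by
  ext n
  simp [comp, neg_mul, Finset.sum_neg_distrib]

lemma comp_sub (F F' : PowerSeries ℂ) : comp (F - F') G = comp F G - comp F' G := by
  rw [sub_eq_add_neg, comp_add, comp_neg, sub_eq_add_neg]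

lemma comp_pow (hG : PowerSeries.constantCoeff G = 0) (F : PowerSeries ℂ) (m : ℕ) : comp (F ^ m) G = comp F G ^ m := by
  induction m with
  | zero => simpa using comp_one hG
  | succ m ih => rw [pow_succ, pow_succ, comp_mul hG, ih]

end Aux

/-- Moment series of the free multiplicative convolution of the free Poisson
distribution with the free Poisson distribution shifted by `−1`: with
`σ = √(4 + X²)` (the series with constant term `2` and `σ² = 4 + X²`) and
χ-series `χ = X·(σ − X)/(2(1+X²)²)` (in the variable `w = √z`, coming from the
S-transform `(−z+√(z²+4z))/(2z(1+z))`), any `ψ` with zero constant term and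
`ψ ∘ χ = X²` has `M = 1 + ψ` satisfying `X²·M⁴ + X·M³ − X·M² − M + 1 = 0` — the
formal power series form of `g⁴z² + z²g³ − zg² − gz + 1 = 0` for the Cauchy
transform of `μ ⊠ γ`. -/
theorem stmt_15 (σ χ ψ : PowerSeries ℂ)
    (hσ0 : PowerSeries.constantCoeff σ = 2)
    (hσ : σ ^ 2 = 4 + PowerSeries.X ^ 2)
    (hχdef : χ = PowerSeries.X * (σ - PowerSeries.X) *
      ((2 : PowerSeries ℂ) * (1 + PowerSeries.X ^ 2) ^ 2)⁻¹)
    (hψ0 : PowerSeries.constantCoeff ψ = 0)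
    (hψ : comp ψ χ = PowerSeries.X ^ 2) :
    PowerSeries.X ^ 2 * (1 + ψ) ^ 4 + PowerSeries.X * (1 + ψ) ^ 3
      - PowerSeries.X * (1 + ψ) ^ 2 - (1 + ψ) + 1 = 0 := by
  set A : PowerSeries ℂ := (2 : PowerSeries ℂ) * (1 + PowerSeries.X ^ 2) ^ 2 with hA
  have hA0 : PowerSeries.constantCoeff A = 2 := by
    simp [hA, map_pow, map_mul, map_add, map_ofNat]
  have hAunit : A * A⁻¹ = 1 := PowerSeries.mul_inv_cancel A (by rw [hA0]; norm_num)
  have hv0 : PowerSeries.constantCoeff ((σ - PowerSeries.X) * A⁻¹) = 1 := by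
    rw [map_mul, map_sub, hσ0, PowerSeries.constantCoeff_X, sub_zero,
      PowerSeries.constantCoeff_inv, hA0]
    norm_num
  have hχfact : χ = PowerSeries.X * ((σ - PowerSeries.X) * A⁻¹) := by
    rw [hχdef, mul_assoc]
  have hχ0 : PowerSeries.constantCoeff χ = 0 := by
    rw [hχfact, map_mul, PowerSeries.constantCoeff_X, zero_mul]
  -- the algebraic identity satisfied by χ
  have hχalg : χ ^ 2 * (1 + PowerSeries.X ^ 2) ^ 4 + χ * (1 + PowerSeries.X ^ 2) ^ 3
      - χ * (1 + PowerSeries.X ^ 2) ^ 2 - PowerSeries.X ^ 2 = 0 := by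
    have hχA : χ * A = PowerSeries.X * (σ - PowerSeries.X) := by
      rw [hχfact, mul_assoc, mul_assoc, mul_comm A⁻¹ A, hAunit, mul_one]
    have hmul : (χ ^ 2 * (1 + PowerSeries.X ^ 2) ^ 4 + χ * (1 + PowerSeries.X ^ 2) ^ 3
        - χ * (1 + PowerSeries.X ^ 2) ^ 2 - PowerSeries.X ^ 2) * A ^ 2 = 0 := by
      have expand : (χ ^ 2 * (1 + PowerSeries.X ^ 2) ^ 4 + χ * (1 + PowerSeries.X ^ 2) ^ 3
          - χ * (1 + PowerSeries.X ^ 2) ^ 2 - PowerSeries.X ^ 2) * A ^ 2 =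
          (χ * A) ^ 2 * (1 + PowerSeries.X ^ 2) ^ 4
          + (χ * A) * ((1 + PowerSeries.X ^ 2) ^ 3 * A)
          - (χ * A) * ((1 + PowerSeries.X ^ 2) ^ 2 * A)
          - PowerSeries.X ^ 2 * A ^ 2 := by ring
      rw [expand, hχA, hA]
      linear_combination (PowerSeries.X ^ 2 * (1 + PowerSeries.X ^ 2) ^ 4) * hσ
    have hA2 : (A : PowerSeries ℂ) ^ 2 ≠ 0 := by
      intro h
      have := congrArg (PowerSeries.constantCoeff) h
      rw [map_pow, hA0] at this
      norm_num at this
    exact (mul_eq_zero.mp hmul).resolve_right hA2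
  -- compose the target with χ
  set P : PowerSeries ℂ := PowerSeries.X ^ 2 * (1 + ψ) ^ 4 + PowerSeries.X * (1 + ψ) ^ 3
      - PowerSeries.X * (1 + ψ) ^ 2 - (1 + ψ) + 1 with hP
  have hcompP : comp P χ = 0 := by
    rw [hP]
    simp only [comp_add, comp_sub, comp_mul hχ0, comp_pow hχ0, comp_one hχ0,
      comp_X hχ0, hψ]
    linear_combination hχalg
  -- injectivity of composition with χ
  have hP0 : ∀ n, PowerSeries.coeff n P = 0 := by
    intro n
    induction n using Nat.strong_induction_on with
    | _ n ih =>
      have h1 : PowerSeries.coeff n (comp P χ) = PowerSeries.coeff n P := by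
        rw [comp, coeff_mk]
        rw [map_sum, Finset.sum_eq_single n]
        · have h2 : PowerSeries.C (PowerSeries.coeff n P) * χ ^ n =
              PowerSeries.X ^ n * (PowerSeries.C (PowerSeries.coeff n P) *
                ((σ - PowerSeries.X) * A⁻¹) ^ n) := by
            rw [hχfact, mul_pow]; ring
          rw [h2]
          have h3 := PowerSeries.coeff_X_pow_mul (PowerSeries.C (PowerSeries.coeff n P) *
            ((σ - PowerSeries.X) * A⁻¹) ^ n) n 0
          rw [zero_add] at h3
          rw [h3]
          simp [PowerSeries.coeff_zero_eq_constantCoeff, hv0]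
        · intro k hk hkn
          rw [Finset.mem_range] at hk
          rw [ih k (by omega)]
          simp
        · intro h
          rw [Finset.mem_range] at h
          omega
      rw [hcompP] at h1
      rw [← h1]
      simp
  ext n
  rw [hP0 n]
  simp
end
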